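/- Let E be a local (a,b)-module (i.e. a^N·E ⊂ b·E for some N ≥ 1). Then there exists a smallest normal submodule I ⊂ E such that E/I is regular, and this I is totally irregular, i.e. every Ã-linear map from I to a simple pole (a,b)-module is zero. -/

import Mathlib

set_option linter.unusedSectionVars false
set_option maxHeartbeats 1000000

open PowerSeries

/-- An (a,b)-module: a left module over the `b`-adic completion `Ã` of `ℂ⟨a,b⟩`
(relation `ab − ba = b²`) which is free of finite rank over `ℂ⟦b⟧`.  Here `b` acts
as scalar multiplication by the power series variable `X` and `a` is a `ℂ`-linear
endomorphism satisfying the commutation relation. -/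
structure ABMod where
  carrier : Type
  [acg : AddCommGroup carrier]
  [modC : Module ℂ carrier]
  [modPS : Module (PowerSeries ℂ) carrier]
  [tower : IsScalarTower ℂ (PowerSeries ℂ) carrier]
  [free : Module.Free (PowerSeries ℂ) carrier]
  [finite : Module.Finite (PowerSeries ℂ) carrier]
  a : carrier →ₗ[ℂ] carrier
  comm : ∀ x : carrier,
    a ((X : ℂ⟦X⟧) • x) = (X : ℂ⟦X⟧) • a x + ((X * X : ℂ⟦X⟧)) • x

attribute [instance] ABMod.acg ABMod.modC ABMod.modPS ABMod.tower ABMod.free ABMod.finite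

/-- `F` has a simple pole : `a·F ⊆ b·F`. -/
def ABMod.SimplePole (F : ABMod) : Prop :=
  ∀ x : F.carrier, ∃ y : F.carrier, F.a x = (X : ℂ⟦X⟧) • y

section
variable (E : Type) [AddCommGroup E] [Module ℂ E] [Module (PowerSeries ℂ) E]
  [IsScalarTower ℂ (PowerSeries ℂ) E] (a : E →ₗ[ℂ] E)

/-- A submodule is normal when `N ∩ bE = b·N`. -/
def IsNormal (N : Submodule (PowerSeries ℂ) E) : Prop :=
  ∀ x ∈ N, (∃ y : E, x = (X : ℂ⟦X⟧) • y) → ∃ y ∈ N, x = (X : ℂ⟦X⟧) • y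

/-- The quotient `E/N` is regular : it embeds (`Ã`-linearly) in a simple pole
(a,b)-module, i.e. there is an `Ã`-linear map `g` from `E` to a simple pole
(a,b)-module whose kernel is exactly `N`. -/
def RegularQuotient (N : Submodule (PowerSeries ℂ) E) : Prop :=
  ∃ F : ABMod, F.SimplePole ∧ ∃ g : E →ₗ[ℂ] F.carrier,
    (∀ x : E, g ((X : ℂ⟦X⟧) • x) = (X : ℂ⟦X⟧) • g x) ∧
    (∀ x : E, g (a x) = F.a (g x)) ∧
    (∀ x : E, g x = 0 ↔ x ∈ N)

/-- A submodule `I` (with its induced (a,b)-structure) is totally irregular :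
every `Ã`-linear map from `I` to a simple pole (a,b)-module vanishes. -/
def TotallyIrregular (I : Submodule (PowerSeries ℂ) E) : Prop :=
  ∀ F : ABMod, F.SimplePole →
    ∀ g : I →ₗ[ℂ] F.carrier,
      (∀ x : I, g ((X : ℂ⟦X⟧) • x) = (X : ℂ⟦X⟧) • g x) →
      (∀ (x : I) (h : a (x : E) ∈ I), g ⟨a (x : E), h⟩ = F.a (g x)) →
      g = 0

end

open PowerSeries

namespace ABAux

noncomputable section

local notation "R" => PowerSeries ℂ

lemma X_pow_ne_zero (n : ℕ) : (X : R) ^ n ≠ 0 := pow_ne_zero _ X_ne_zero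

variable {M : Type} [AddCommGroup M] [Module R M]

/-- saturation predicate -/
def Sat (p : Submodule R M) : Prop := ∀ x : M, (X : R) • x ∈ p → x ∈ p

lemma sat_pow_smul {p : Submodule R M} (hp : Sat p) :
    ∀ (n : ℕ) (x : M), (X : R) ^ n • x ∈ p → x ∈ p := by
  intro n
  induction n with
  | zero => intro x hx; simpa using hx
  | succ n ih =>
      intro x hx
      rw [pow_succ, mul_smul] at hx
      exact hp x (ih _ hx)
lemma sat_smul_mem {p : Submodule R M} (hp : Sat p) {f : R} (hf : f ≠ 0) {x : M}
    (h : f • x ∈ p) : x ∈ p := by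
  obtain ⟨k, u, hu, rfl⟩ : ∃ (k : ℕ) (u : R), IsUnit u ∧ f = (X : R) ^ k * u := by
    refine ⟨f.order.toNat, divXPowOrder f, ?_, ?_⟩
    · exact ⟨Unit_of_divided_by_X_pow_order f, Unit_of_divided_by_X_pow_order_nonzero hf⟩
    · exact X_pow_order_mul_divXPowOrder.symm
  obtain ⟨v, rfl⟩ := hu
  rw [mul_smul] at h
  have hmem := sat_pow_smul hp k _ h
  have h2 : (((v⁻¹ : Rˣ) : R)) • ((v : R) • x) ∈ p := p.smul_mem _ hmem
  rwa [smul_smul, Units.inv_mul, one_smul] at h2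

lemma noZeroSMulDivisors_quotient {p : Submodule R M} (hp : Sat p) :
    NoZeroSMulDivisors R (M ⧸ p) := by
  constructor
  intro f z h
  by_cases hf : f = 0
  · exact Or.inl hf
  · right
    obtain ⟨x, rfl⟩ := Submodule.Quotient.mk_surjective p z
    rw [← Submodule.Quotient.mk_smul, Submodule.Quotient.mk_eq_zero] at h
    rw [Submodule.Quotient.mk_eq_zero]
    exact sat_smul_mem hp hf h

lemma exists_retraction (p : Submodule R M) [Module.Free R (M ⧸ p)] :
    ∃ r : M →ₗ[R] p, ∀ x : p, r (x : M) = x := by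
  obtain ⟨s, hs⟩ := Module.projective_lifting_property p.mkQ
    (LinearMap.id : M ⧸ p →ₗ[R] M ⧸ p) p.mkQ_surjective
  have hsec : ∀ z : M ⧸ p, p.mkQ (s z) = z := fun z => by
    simpa using LinearMap.congr_fun hs z
  refine ⟨LinearMap.codRestrict p ((LinearMap.id : M →ₗ[R] M) - s ∘ₗ p.mkQ) ?_, ?_⟩
  · intro x
    have h0 : p.mkQ (((LinearMap.id : M →ₗ[R] M) - s ∘ₗ p.mkQ) x) = 0 := by
      simp only [LinearMap.sub_apply, LinearMap.id_apply, LinearMap.comp_apply, map_sub, hsec,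
        sub_self]
    rwa [Submodule.mkQ_apply, Submodule.Quotient.mk_eq_zero] at h0
  · intro x
    apply Subtype.ext
    have hx0 : p.mkQ (x : M) = 0 := by
      rw [Submodule.mkQ_apply, Submodule.Quotient.mk_eq_zero]; exact x.2
    simp only [LinearMap.codRestrict_apply, LinearMap.sub_apply, LinearMap.id_apply,
      LinearMap.comp_apply, hx0, map_zero, sub_zero]

section Sep

variable [Module.Free R M] [Module.Finite R M]

lemma eq_zero_of_forall_X_pow_smul (z : M) (h : ∀ n : ℕ, ∃ y : M, z = (X : R) ^ n • y) :
    z = 0 := by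
  classical
  set b := Module.Free.chooseBasis R M with hb
  have hrepr : ∀ i, b.repr z i = 0 := by
    intro i
    apply PowerSeries.ext
    intro m
    rw [map_zero]
    obtain ⟨y, hy⟩ := h (m + 1)
    have hz : b.repr z i = (X : R) ^ (m+1) * b.repr y i := by
      rw [hy, map_smul, Finsupp.smul_apply, smul_eq_mul]
    rw [hz]
    have hdvd : ((X : R) ^ (m+1)) ∣ (X : R) ^ (m+1) * b.repr y i := Dvd.intro _ rfl
    rw [PowerSeries.X_pow_dvd_iff] at hdvd
    exact hdvd m (Nat.lt_succ_self m)
  have hz2 : b.repr z = b.repr 0 := by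
    rw [map_zero]
    exact DFunLike.ext _ _ (fun i => by simp [hrepr i])
  exact b.repr.injective hz2

end Sep

section Upgrade

variable {E' F' : Type}
  [AddCommGroup E'] [Module ℂ E'] [Module R E'] [IsScalarTower ℂ R E']
  [AddCommGroup F'] [Module ℂ F'] [Module R F'] [IsScalarTower ℂ R F']
  [Module.Free R F'] [Module.Finite R F']

lemma smul_pow_upgrade (g : E' →ₗ[ℂ] F') (hX : ∀ x, g ((X : R) • x) = (X : R) • g x)
    (n : ℕ) (x : E') : g ((X : R) ^ n • x) = (X : R) ^ n • g x := by
  induction n with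
  | zero => simp
  | succ n ih =>
      have : (X : R) ^ (n+1) = (X:R) * (X:R)^n := by ring
      rw [this, mul_smul, hX, ih, mul_smul]

lemma C_smul (c : ℂ) (x : E') : (C c) • x = c • x := by
  have : (C c) = algebraMap ℂ R c := by
    rw [PowerSeries.algebraMap_apply]; simp
  rw [this, algebraMap_smul]

/-- a `ℂ`-linear map commuting with `X•` between suitable modules is `ℂ⟦X⟧`-linear. -/
lemma smul_upgrade (g : E' →ₗ[ℂ] F') (hX : ∀ x, g ((X : R) • x) = (X : R) • g x)
    (f : R) (x : E') : g (f • x) = f • g x := by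
  have key : ∀ (n : ℕ) (f : R) (x : E'), ∃ y : F', g (f • x) - f • g x = (X : R) ^ n • y := by
    intro n
    induction n with
    | zero => intro f x; exact ⟨g (f • x) - f • g x, by simp⟩
    | succ n ih =>
        intro f x
        obtain ⟨f', hf'⟩ : ∃ f' : R, f = C (constantCoeff f) + X * f' := by
          have : (X : R) ∣ f - C (constantCoeff f) := by
            rw [PowerSeries.X_dvd_iff]; simp
          obtain ⟨f', hf'⟩ := this
          exact ⟨f', by rw [← hf']; ring⟩
        obtain ⟨y, hy⟩ := ih f' x
        refine ⟨y, ?_⟩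
        have e1 : (C (constantCoeff f) + X * f') • x
            = (constantCoeff f) • x + (X:R) • (f' • x) := by
          rw [add_smul, C_smul, mul_smul]
        have e2 : (C (constantCoeff f) + X * f') • g x
            = (constantCoeff f) • g x + (X:R) • (f' • g x) := by
          rw [add_smul, C_smul, mul_smul]
        have hh : (X:R) • g (f' • x) - (X:R) • (f' • g x) = (X : R)^(n+1) • y := by
          rw [← smul_sub, hy, smul_smul, ← pow_succ']
        rw [hf', e1, e2, map_add, map_smul, hX, ← hh]
        abel
  apply sub_eq_zero.mp
  apply eq_zero_of_forall_X_pow_smul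
  intro n
  obtain ⟨y, hy⟩ := key n f x
  exact ⟨y, hy⟩

end Upgrade

section Rank

variable {N : Type} [AddCommGroup N] [Module R N]
  [Module.Free R M] [Module.Finite R M] [Module.Free R N] [Module.Finite R N]

lemma finrank_le_of_surjective (f : M →ₗ[R] N) (hf : Function.Surjective f) :
    Module.finrank R N ≤ Module.finrank R M := by
  obtain ⟨s, hs⟩ := Module.projective_lifting_property f LinearMap.id hf
  have hsec : Function.LeftInverse f s := fun z => by
    simpa using LinearMap.congr_fun hs z
  exact LinearMap.finrank_le_finrank_of_injective hsec.injective

lemma injective_of_surjective_of_finrank_le (f : M →ₗ[R] N) (hf : Function.Surjective f)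
    (hr : Module.finrank R M ≤ Module.finrank R N) : Function.Injective f := by
  have heq : Module.finrank R N = Module.finrank R M :=
    le_antisymm (finrank_le_of_surjective f hf) hr
  let e : N ≃ₗ[R] M := (Module.finBasis R N).equiv (Module.finBasis R M) (finCongr heq)
  have hsurj : Function.Surjective (e.toLinearMap ∘ₗ f) := by
    exact e.surjective.comp hf
  have hinj := IsNoetherian.injective_of_surjective_endomorphism (e.toLinearMap ∘ₗ f) hsurj
  intro x y hxy
  exact hinj (by simp [LinearMap.comp_apply, hxy])

end Rank

/-- saturation of a submodule -/
def satSub (p : Submodule R M) : Submodule R M where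
  carrier := {w | ∃ k : ℕ, (X : R) ^ k • w ∈ p}
  add_mem' := by
    rintro x y ⟨k, hk⟩ ⟨l, hl⟩
    refine ⟨k + l, ?_⟩
    rw [smul_add]
    apply Submodule.add_mem
    · rw [pow_add, mul_comm, mul_smul]
      exact p.smul_mem _ hk
    · rw [pow_add, mul_smul]
      exact p.smul_mem _ hl
  zero_mem' := ⟨0, by simp⟩
  smul_mem' := by
    rintro c x ⟨k, hk⟩
    refine ⟨k, ?_⟩
    rw [smul_comm]
    exact p.smul_mem _ hk

lemma le_satSub (p : Submodule R M) : p ≤ satSub p := fun x hx => ⟨0, by simpa using hx⟩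

lemma sat_satSub (p : Submodule R M) : Sat (satSub p) := by
  rintro x ⟨k, hk⟩
  refine ⟨k + 1, ?_⟩
  rw [pow_succ, mul_smul]
  exact hk

lemma satSub_bound [IsNoetherian R M] (p : Submodule R M) :
    ∃ c : ℕ, ∀ w ∈ satSub p, (X : R) ^ c • w ∈ p := by
  classical
  have hfg : (satSub p).FG := IsNoetherian.noetherian _
  obtain ⟨s, hs⟩ := hfg
  have hmem : ∀ w : s, ∃ k : ℕ, (X : R) ^ k • (w : M) ∈ p := by
    intro w
    have : (w : M) ∈ satSub p := by
      rw [← hs]; exact Submodule.subset_span (Finset.mem_coe.mpr w.2)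
    exact this
  choose K hK using hmem
  refine ⟨Finset.univ.sup (fun w : s => K w), ?_⟩
  have hT : satSub p ≤ p.comap (LinearMap.lsmul R M ((X : R) ^ (Finset.univ.sup (fun w : s => K w)))) := by
    rw [← hs, Submodule.span_le]
    intro w hw
    have hle : K ⟨w, hw⟩ ≤ Finset.univ.sup (fun w : s => K w) :=
      Finset.le_sup (Finset.mem_univ _)
    rw [SetLike.mem_coe, Submodule.mem_comap, LinearMap.lsmul_apply]
    have : (X : R) ^ (Finset.univ.sup (fun w : s => K w)) =
        (X : R) ^ (Finset.univ.sup (fun w : s => K w) - K ⟨w, hw⟩) * (X : R) ^ (K ⟨w, hw⟩) := by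
      rw [← pow_add, Nat.sub_add_cancel hle]
    rw [this, mul_smul]
    exact p.smul_mem _ (hK ⟨w, hw⟩)
  intro w hw
  have := hT hw
  rwa [Submodule.mem_comap, LinearMap.lsmul_apply] at this

end

end ABAux

noncomputable section ABConstructions

open ABAux

/-- the trivial (a,b)-module -/
@[reducible] def punitAB : ABMod where
  carrier := PUnit
  a := 0
  comm := fun _ => Subsingleton.elim _ _

lemma punitAB_pole : punitAB.SimplePole := fun _ => ⟨0, Subsingleton.elim _ _⟩

/-- product of two (a,b)-modules -/
@[reducible] def prodAB (F G : ABMod) : ABMod where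
  carrier := F.carrier × G.carrier
  a := F.a.prodMap G.a
  comm := by
    rintro ⟨x, y⟩
    simp only [Prod.smul_mk, LinearMap.prodMap_apply, F.comm, G.comm, Prod.mk_add_mk]

lemma prodAB_pole (F G : ABMod) (hF : F.SimplePole) (hG : G.SimplePole) :
    (prodAB F G).SimplePole := by
  rintro ⟨x, y⟩
  obtain ⟨u, hu⟩ := hF x
  obtain ⟨v, hv⟩ := hG y
  exact ⟨(u, v), by simp [prodAB, hu, hv]⟩

end ABConstructions

/-- Let `E` be a local (a,b)-module (`a^N·E ⊆ b·E` for some `N ≥ 1`).  Then there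
is a smallest normal (`a`- and `b`-stable) submodule `I ⊆ E` such that `E/I` is
regular, and this `I` is totally irregular. -/
theorem exists_smallest_irregularity_submodule
    (E : Type) [AddCommGroup E] [Module ℂ E] [Module (PowerSeries ℂ) E]
    [IsScalarTower ℂ (PowerSeries ℂ) E]
    [Module.Free (PowerSeries ℂ) E] [Module.Finite (PowerSeries ℂ) E]
    (a : E →ₗ[ℂ] E)
    (hcomm : ∀ x : E, a ((X : ℂ⟦X⟧) • x) = (X : ℂ⟦X⟧) • a x + ((X * X : ℂ⟦X⟧)) • x)
    (hlocal : ∃ N : ℕ, 1 ≤ N ∧ ∀ x : E, ∃ y : E,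
      ((a : Module.End ℂ E) ^ N) x = (X : ℂ⟦X⟧) • y) :
    ∃ I : Submodule (PowerSeries ℂ) E,
      (∀ x ∈ I, a x ∈ I) ∧ IsNormal E I ∧ RegularQuotient E a I ∧
      (∀ J : Submodule (PowerSeries ℂ) E,
        (∀ x ∈ J, a x ∈ J) → IsNormal E J → RegularQuotient E a J → I ≤ J) ∧
      TotallyIrregular E a I := by
  classical
  clear hlocal
  -- the family of "good" submodules
  set P : Submodule ℂ⟦X⟧ E → Prop := fun J =>
    (∀ x ∈ J, a x ∈ J) ∧ IsNormal E J ∧ RegularQuotient E a J with hP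
  -- normal submodules are saturated
  have hsat : ∀ J : Submodule ℂ⟦X⟧ E, IsNormal E J → ABAux.Sat J := by
    intro J hJ x hx
    obtain ⟨y, hyJ, hxy⟩ := hJ _ hx ⟨x, rfl⟩
    have : x = y := smul_right_injective E X_ne_zero hxy
    rwa [this]
  -- ⊤ is good
  have hPtop : P ⊤ := by
    refine ⟨fun x _ => trivial, fun x _ ⟨y, hy⟩ => ⟨y, trivial, hy⟩, ?_⟩
    refine ⟨punitAB, punitAB_pole, 0, ?_, ?_, ?_⟩
    · intro x; exact Subsingleton.elim _ _
    · intro x; exact Subsingleton.elim _ _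
    · intro x; simp
  -- good is stable by intersection
  have hPinf : ∀ J K : Submodule ℂ⟦X⟧ E, P J → P K → P (J ⊓ K) := by
    rintro J K ⟨hJa, hJn, FJ, hFJ, gJ, hgJX, hgJa, hgJk⟩ ⟨hKa, hKn, FK, hFK, gK, hgKX, hgKa, hgKk⟩
    refine ⟨?_, ?_, ?_⟩
    · intro x hx
      rw [Submodule.mem_inf] at hx ⊢
      exact ⟨hJa x hx.1, hKa x hx.2⟩
    · rintro x hx ⟨y, hxy⟩
      rw [Submodule.mem_inf] at hx
      refine ⟨y, ?_, hxy⟩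
      rw [Submodule.mem_inf]
      subst hxy
      exact ⟨hsat J hJn y hx.1, hsat K hKn y hx.2⟩
    · refine ⟨prodAB FJ FK, prodAB_pole FJ FK hFJ hFK, gJ.prod gK, ?_, ?_, ?_⟩
      · intro x
        show (gJ ((X:ℂ⟦X⟧) • x), gK ((X:ℂ⟦X⟧) • x)) = (X:ℂ⟦X⟧) • (gJ x, gK x)
        rw [Prod.smul_mk, hgJX, hgKX]
      · intro x
        show (gJ (a x), gK (a x)) = (FJ.a (gJ x), FK.a (gK x))
        rw [hgJa, hgKa]
      · intro x
        show (gJ x, gK x) = 0 ↔ x ∈ J ⊓ K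
        rw [Prod.mk_eq_zero, hgJk, hgKk, Submodule.mem_inf]
  -- pick a good submodule with maximal corank
  set nk : Submodule ℂ⟦X⟧ E → ℕ := fun J => Module.finrank ℂ⟦X⟧ (E ⧸ J) with hnk
  have hbound : ∀ J : Submodule ℂ⟦X⟧ E, IsNormal E J →
      nk J ≤ Module.finrank ℂ⟦X⟧ E := by
    intro J hJ
    haveI := ABAux.noZeroSMulDivisors_quotient (hsat J hJ)
    exact ABAux.finrank_le_of_surjective J.mkQ (Submodule.mkQ_surjective J)
  set S : Set ℕ := {m | ∃ J, P J ∧ nk J = m} with hS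
  have hSne : S.Nonempty := ⟨nk ⊤, ⊤, hPtop, rfl⟩
  have hSb : BddAbove S := by
    refine ⟨Module.finrank ℂ⟦X⟧ E, ?_⟩
    rintro m ⟨J, hJ, rfl⟩
    exact hbound J hJ.2.1
  have hmem := Nat.sSup_mem hSne hSb
  obtain ⟨I, hPI, hnI⟩ := hmem
  -- minimality of I
  have hmin : ∀ J : Submodule ℂ⟦X⟧ E, P J → I ≤ J := by
    intro J hPJ
    have hPK : P (I ⊓ J) := hPinf I J hPI hPJ
    haveI := ABAux.noZeroSMulDivisors_quotient (hsat _ hPK.2.1)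
    haveI := ABAux.noZeroSMulDivisors_quotient (hsat _ hPI.2.1)
    have hle : I ⊓ J ≤ I := inf_le_left
    set π : (E ⧸ (I ⊓ J)) →ₗ[ℂ⟦X⟧] (E ⧸ I) :=
      Submodule.mapQ (I ⊓ J) I LinearMap.id (by intro x hx; simpa using hle hx) with hπ
    have hπs : Function.Surjective π := by
      intro z
      obtain ⟨x, rfl⟩ := Submodule.Quotient.mk_surjective I z
      exact ⟨Submodule.Quotient.mk x, by simp [hπ, Submodule.mapQ_apply]⟩
    have h1 : nk (I ⊓ J) ≤ nk I := by
      have hm : nk (I ⊓ J) ∈ S := ⟨I ⊓ J, hPK, rfl⟩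
      rw [hnI]
      exact le_csSup hSb hm
    have hinj := ABAux.injective_of_surjective_of_finrank_le π hπs h1
    intro x hx
    have h2 : π (Submodule.Quotient.mk x) = 0 := by
      simp [hπ, Submodule.mapQ_apply, Submodule.Quotient.mk_eq_zero, hx]
    have h0 : (Submodule.Quotient.mk x : E ⧸ (I ⊓ J)) = 0 := by
      apply hinj
      simpa using h2
    have := (Submodule.Quotient.mk_eq_zero _).mp h0
    exact this.2
  -- total irregularity of I
  have hTI : TotallyIrregular E a I := by
    intro F hF g hgX hga
    have hsatI : ABAux.Sat I := hsat I hPI.2.1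
    haveI := ABAux.noZeroSMulDivisors_quotient hsatI
    obtain ⟨rI, hrI⟩ := ABAux.exists_retraction (M := E) I
    obtain ⟨F1, hF1, g1, hg1X, hg1a, hg1k⟩ := hPI.2.2
    have hg1R : ∀ (f : ℂ⟦X⟧) (x : E), g1 (f • x) = f • g1 x := ABAux.smul_upgrade g1 hg1X
    set G1 : E →ₗ[ℂ⟦X⟧] F1.carrier :=
      { toFun := g1, map_add' := g1.map_add, map_smul' := fun f x => hg1R f x } with hG1
    have hgR : ∀ (f : ℂ⟦X⟧) (x : I), g (f • x) = f • g x := ABAux.smul_upgrade g hgX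
    set G : I →ₗ[ℂ⟦X⟧] F.carrier :=
      { toFun := g, map_add' := g.map_add, map_smul' := fun f x => hgR f x } with hG
    set Gh : E →ₗ[ℂ⟦X⟧] F.carrier := G ∘ₗ rI with hGh
    -- the defect D
    set D : E →ₗ[ℂ] F.carrier :=
      ((Gh.restrictScalars ℂ) ∘ₗ a) - (F.a ∘ₗ (Gh.restrictScalars ℂ)) with hDdef
    have hD : ∀ x : E, D x = Gh (a x) - F.a (Gh x) := fun x => rfl
    have hDX : ∀ x : E, D ((X : ℂ⟦X⟧) • x) = (X : ℂ⟦X⟧) • D x := by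
      intro x
      have e1 : Gh (a ((X:ℂ⟦X⟧) • x)) = (X:ℂ⟦X⟧) • Gh (a x) + ((X*X : ℂ⟦X⟧)) • Gh x := by
        rw [hcomm x, map_add, map_smul, map_smul]
      have e2 : F.a (Gh ((X:ℂ⟦X⟧) • x)) = (X:ℂ⟦X⟧) • F.a (Gh x) + ((X*X : ℂ⟦X⟧)) • Gh x := by
        rw [map_smul, F.comm]
      rw [hD, hD, e1, e2, smul_sub]
      abel
    have hDpow : ∀ (n : ℕ) (x : E), D ((X : ℂ⟦X⟧)^n • x) = (X : ℂ⟦X⟧)^n • D x :=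
      ABAux.smul_pow_upgrade D hDX
    have haI : ∀ x ∈ I, a x ∈ I := hPI.1
    have hGhI : ∀ (x : E) (hx : x ∈ I), Gh x = g ⟨x, hx⟩ := by
      intro x hx
      show G (rI x) = g ⟨x, hx⟩
      rw [show rI x = ⟨x, hx⟩ from hrI ⟨x, hx⟩]
      rfl
    have hDI : ∀ x ∈ I, D x = 0 := by
      intro x hx
      rw [hD, hGhI x hx, hGhI (a x) (haI x hx), hga ⟨x, hx⟩ (haI x hx), sub_self]
    -- the range of G1 and its saturation
    set Q : Submodule ℂ⟦X⟧ F1.carrier := LinearMap.range G1 with hQ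
    obtain ⟨c₀, hc₀⟩ := ABAux.satSub_bound (M := F1.carrier) Q
    haveI := ABAux.noZeroSMulDivisors_quotient (ABAux.sat_satSub (M := F1.carrier) Q)
    obtain ⟨rQ, hrQ⟩ := ABAux.exists_retraction (ABAux.satSub Q)
    set mQ : ABAux.satSub Q →ₗ[ℂ⟦X⟧] Q :=
      LinearMap.codRestrict Q
        ((LinearMap.lsmul ℂ⟦X⟧ F1.carrier ((X:ℂ⟦X⟧)^c₀)) ∘ₗ (ABAux.satSub Q).subtype)
        (fun w => hc₀ _ w.2) with hmQ
    obtain ⟨s', hs'0⟩ := Module.projective_lifting_property G1.rangeRestrict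
      (LinearMap.id : Q →ₗ[ℂ⟦X⟧] Q) (LinearMap.surjective_rangeRestrict G1)
    have hs' : ∀ q : Q, G1 (s' q) = (q : F1.carrier) := by
      intro q
      have h1 := LinearMap.congr_fun hs'0 q
      simpa using congrArg Subtype.val h1
    set L : F1.carrier →ₗ[ℂ⟦X⟧] E := s' ∘ₗ mQ ∘ₗ rQ with hL
    set Dt : F1.carrier →ₗ[ℂ] F.carrier :=
      ((LinearMap.lsmul ℂ⟦X⟧ F.carrier (X : ℂ⟦X⟧)).restrictScalars ℂ) ∘ₗ D ∘ₗ
        (L.restrictScalars ℂ) with hDtdef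
    have hDt : ∀ u, Dt u = (X : ℂ⟦X⟧) • D (L u) := fun u => rfl
    have hDtX : ∀ u, Dt ((X : ℂ⟦X⟧) • u) = (X : ℂ⟦X⟧) • Dt u := by
      intro u
      rw [hDt, hDt, map_smul, hDX]
    have hDtG1 : ∀ x : E, Dt (g1 x) = (X : ℂ⟦X⟧)^(c₀+1) • D x := by
      intro x
      have hxQ : g1 x ∈ Q := ⟨x, rfl⟩
      have hsm : g1 x ∈ ABAux.satSub Q := ABAux.le_satSub Q hxQ
      have hrQx : rQ (g1 x) = ⟨g1 x, hsm⟩ := hrQ ⟨g1 x, hsm⟩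
      have he : L (g1 x) = s' (mQ ⟨g1 x, hsm⟩) := by
        rw [hL]
        simp only [LinearMap.comp_apply, hrQx]
      have hmQv : ((mQ ⟨g1 x, hsm⟩ : Q) : F1.carrier) = (X:ℂ⟦X⟧)^c₀ • g1 x := rfl
      have hG1e : G1 (L (g1 x)) = (X:ℂ⟦X⟧)^c₀ • g1 x := by
        rw [he, hs', hmQv]
      have hker : L (g1 x) - (X:ℂ⟦X⟧)^c₀ • x ∈ I := by
        apply (hg1k _).mp
        have : g1 (L (g1 x) - (X:ℂ⟦X⟧)^c₀ • x) = g1 (L (g1 x)) - g1 ((X:ℂ⟦X⟧)^c₀ • x) :=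
          map_sub g1 _ _
        rw [this, hg1R]
        have : g1 (L (g1 x)) = (X:ℂ⟦X⟧)^c₀ • g1 x := hG1e
        rw [this, sub_self]
      have hDe : D (L (g1 x)) = (X:ℂ⟦X⟧)^c₀ • D x := by
        have h0 := hDI _ hker
        rw [map_sub, hDpow, sub_eq_zero] at h0
        exact h0
      rw [hDt, hDe, smul_smul, ← pow_succ']
    -- the auxiliary simple pole module F2
    set XsF : F.carrier →ₗ[ℂ] F.carrier :=
      (LinearMap.lsmul ℂ⟦X⟧ F.carrier (X : ℂ⟦X⟧)).restrictScalars ℂ with hXsF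
    set A2 : (F1.carrier × F.carrier) →ₗ[ℂ] (F1.carrier × F.carrier) :=
      LinearMap.prod (F1.a ∘ₗ LinearMap.fst ℂ F1.carrier F.carrier)
        ((F.a ∘ₗ LinearMap.snd ℂ F1.carrier F.carrier)
          - ((c₀ + 1 : ℕ) : ℂ) • (XsF ∘ₗ LinearMap.snd ℂ F1.carrier F.carrier)
          + Dt ∘ₗ LinearMap.fst ℂ F1.carrier F.carrier) with hA2
    have hA2app : ∀ (u : F1.carrier) (v : F.carrier),
        A2 (u, v) = (F1.a u, F.a v - ((c₀ + 1 : ℕ) : ℂ) • ((X:ℂ⟦X⟧) • v) + Dt u) := by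
      intro u v
      rfl
    have hF2comm : ∀ z : F1.carrier × F.carrier,
        A2 ((X : ℂ⟦X⟧) • z) = (X : ℂ⟦X⟧) • A2 z + ((X * X : ℂ⟦X⟧)) • z := by
      rintro ⟨u, v⟩
      have lhs : A2 ((X:ℂ⟦X⟧) • ((u,v) : F1.carrier × F.carrier))
          = (F1.a ((X:ℂ⟦X⟧) • u),
             F.a ((X:ℂ⟦X⟧) • v) - ((c₀ + 1 : ℕ) : ℂ) • ((X:ℂ⟦X⟧) • ((X:ℂ⟦X⟧) • v))
               + Dt ((X:ℂ⟦X⟧) • u)) := rfl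
      have rhs : (X:ℂ⟦X⟧) • A2 ((u,v) : F1.carrier × F.carrier)
            + ((X * X : ℂ⟦X⟧)) • ((u,v) : F1.carrier × F.carrier)
          = ((X:ℂ⟦X⟧) • F1.a u + (X*X : ℂ⟦X⟧) • u,
             (X:ℂ⟦X⟧) • (F.a v - ((c₀ + 1 : ℕ) : ℂ) • ((X:ℂ⟦X⟧) • v) + Dt u)
               + (X*X : ℂ⟦X⟧) • v) := rfl
      rw [lhs, rhs]
      refine Prod.ext ?_ ?_
      · exact F1.comm u
      · show F.a ((X:ℂ⟦X⟧) • v) - ((c₀ + 1 : ℕ) : ℂ) • ((X:ℂ⟦X⟧) • ((X:ℂ⟦X⟧) • v)) + Dt ((X:ℂ⟦X⟧) • u) = _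
        rw [F.comm, hDtX]
        rw [smul_add, smul_sub, smul_comm ((X:ℂ⟦X⟧)) (((c₀ + 1 : ℕ) : ℂ))]
        abel
    set F2 : ABMod := { carrier := F1.carrier × F.carrier, a := A2, comm := hF2comm } with hF2
    have hpole2 : F2.SimplePole := by
      rintro ⟨u, v⟩
      obtain ⟨u', hu'⟩ := hF1 u
      obtain ⟨v', hv'⟩ := hF v
      refine ⟨(u', v' - ((c₀ + 1 : ℕ) : ℂ) • v + D (L u)), ?_⟩
      show A2 (u, v) = (X : ℂ⟦X⟧) • _
      rw [hA2app]
      have : ((X:ℂ⟦X⟧) • ((u', v' - ((c₀ + 1 : ℕ) : ℂ) • v + D (L u)) : F1.carrier × F.carrier))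
          = ((X:ℂ⟦X⟧) • u', (X:ℂ⟦X⟧) • (v' - ((c₀ + 1 : ℕ) : ℂ) • v + D (L u))) := rfl
      rw [this]
      apply Prod.ext
      · exact hu'
      · show F.a v - ((c₀ + 1 : ℕ) : ℂ) • ((X:ℂ⟦X⟧) • v) + Dt u = _
        rw [hv', hDt, smul_add, smul_sub, smul_comm ((X:ℂ⟦X⟧)) (((c₀ + 1 : ℕ) : ℂ))]
    -- the map h : E → F2
    set XcS : F.carrier →ₗ[ℂ] F.carrier :=
      (LinearMap.lsmul ℂ⟦X⟧ F.carrier ((X : ℂ⟦X⟧)^(c₀+1))).restrictScalars ℂ with hXcS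
    set h : E →ₗ[ℂ] F1.carrier × F.carrier :=
      LinearMap.prod g1 (XcS ∘ₗ (Gh.restrictScalars ℂ)) with hh
    have hhapp : ∀ x : E, h x = (g1 x, (X : ℂ⟦X⟧)^(c₀+1) • Gh x) := fun x => rfl
    have hhX : ∀ x : E, h ((X : ℂ⟦X⟧) • x) = (X : ℂ⟦X⟧) • h x := by
      intro x
      rw [hhapp, hhapp]
      have : ((X:ℂ⟦X⟧) • ((g1 x, (X : ℂ⟦X⟧)^(c₀+1) • Gh x) : F1.carrier × F.carrier))
          = ((X:ℂ⟦X⟧) • g1 x, (X:ℂ⟦X⟧) • ((X : ℂ⟦X⟧)^(c₀+1) • Gh x)) := rfl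
      rw [this]
      apply Prod.ext
      · exact hg1X x
      · show (X : ℂ⟦X⟧)^(c₀+1) • Gh ((X:ℂ⟦X⟧) • x) = _
        rw [map_smul, smul_smul, smul_smul, mul_comm]
    -- a-power formula for simple pole modules
    have hFapow : ∀ (n : ℕ) (v : F.carrier), F.a ((X : ℂ⟦X⟧)^n • v)
        = (X : ℂ⟦X⟧)^n • F.a v + ((n : ℕ) : ℂ) • ((X : ℂ⟦X⟧)^(n+1) • v) := by
      intro n
      induction n with
      | zero => intro v; simp
      | succ n ih =>
          intro v
          have e0 : (X:ℂ⟦X⟧)^(n+1) • v = (X:ℂ⟦X⟧) • ((X:ℂ⟦X⟧)^n • v) := by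
            rw [← mul_smul, ← pow_succ']
          rw [e0, F.comm, ih]
          rw [smul_add, smul_smul, ← pow_succ']
          rw [smul_comm ((X:ℂ⟦X⟧)) (((n : ℕ) : ℂ)), smul_smul ((X:ℂ⟦X⟧)), ← pow_succ']
          rw [smul_smul ((X*X : ℂ⟦X⟧)), show ((X*X : ℂ⟦X⟧)) * (X:ℂ⟦X⟧)^n = (X:ℂ⟦X⟧)^(n+2) by ring]
          push_cast
          rw [add_smul, one_smul]
          abel
    have hha : ∀ x : E, h (a x) = A2 (h x) := by
      intro x
      rw [hhapp, hhapp, hA2app]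
      apply Prod.ext
      · exact hg1a x
      · show (X : ℂ⟦X⟧)^(c₀+1) • Gh (a x) = _
        have hGa : Gh (a x) = F.a (Gh x) + D x := by
          rw [hD]; abel
        rw [hGa, hFapow (c₀+1), hDtG1, smul_smul ((X:ℂ⟦X⟧)), ← pow_succ']
        have : (X:ℂ⟦X⟧) ^ (c₀ + 1 + 1) • Gh x = (X:ℂ⟦X⟧) ^ (c₀ + 1 + 1) • Gh x := rfl
        rw [smul_add]
        abel
    -- the kernel of h
    set J : Submodule ℂ⟦X⟧ E := I ⊓ LinearMap.ker Gh with hJ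
    have hkerh : ∀ x : E, h x = 0 ↔ x ∈ J := by
      intro x
      rw [hhapp, Prod.mk_eq_zero, hJ, Submodule.mem_inf, ← hg1k x, LinearMap.mem_ker]
      constructor
      · rintro ⟨h1, h2⟩
        refine ⟨h1, ?_⟩
        have := smul_eq_zero.mp h2
        rcases this with h3 | h3
        · exact absurd h3 (ABAux.X_pow_ne_zero _)
        · exact h3
      · rintro ⟨h1, h2⟩
        exact ⟨h1, by rw [h2, smul_zero]⟩
    have hPJ : P J := by
      refine ⟨?_, ?_, ?_⟩
      · intro x hx
        apply (hkerh (a x)).mp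
        rw [hha x, (hkerh x).mpr hx, map_zero]
      · rintro x hx ⟨y, hxy⟩
        refine ⟨y, ?_, hxy⟩
        apply (hkerh y).mp
        have h0 : h x = 0 := (hkerh x).mpr hx
        rw [hxy, hhX y] at h0
        rcases smul_eq_zero.mp h0 with h1 | h1
        · exact absurd h1 X_ne_zero
        · exact h1
      · exact ⟨F2, hpole2, h, hhX, hha, hkerh⟩
    have hIJ := hmin J hPJ
    apply LinearMap.ext
    rintro ⟨x, hx⟩
    have hxJ := hIJ hx
    rw [hJ, Submodule.mem_inf] at hxJ
    have hGh0 : Gh x = 0 := LinearMap.mem_ker.mp hxJ.2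
    rw [hGhI x hx] at hGh0
    simpa using hGh0
  exact ⟨I, hPI.1, hPI.2.1, hPI.2.2, fun J h1 h2 h3 => hmin J ⟨h1, h2, h3⟩, hTI⟩
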